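/- Let V_1,…,V_n be independent nonnegative integrable random variables and let M ≥ 0. Let τ := min{ t : V_t > M } (with τ := ∞ if no such t exists) and let p := Pr(τ ≤ n). Then E[ V_τ · 1(τ ≤ n) ] ≥ (1−p) · Σ_{t=1}^n E[ V_t · 1(V_t > M) ]. -/

import Mathlib

open MeasureTheory ProbabilityTheory

/-- For independent nonnegative integrable `V₁,…,Vₙ` and a threshold
`M ≥ 0`, let `τ` be the first index with `V_t > M` and `p := Pr(τ ≤ n)`. Then
`E[V_τ·1(τ ≤ n)] ≥ (1−p)·Σ_t E[V_t·1(V_t > M)]`. -/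
theorem first_over_threshold_value
    {Ω : Type*} [MeasurableSpace Ω] (P : Measure Ω) [IsProbabilityMeasure P]
    (n : ℕ) (V : Fin n → Ω → ℝ)
    (hmeas : ∀ t, Measurable (V t))
    (hindep : iIndepFun V P)
    (hnonneg : ∀ t, ∀ᵐ ω ∂P, 0 ≤ V t ω)
    (hint : ∀ t, Integrable (V t) P)
    (M : ℝ) (hM : 0 ≤ M) :
    (1 - (P {ω | ∃ t, M < V t ω}).toReal) *
        ∑ t, ∫ ω, (if M < V t ω then V t ω else 0) ∂P
      ≤ ∫ ω, ∑ t, (if M < V t ω ∧ ∀ s, s < t → V s ω ≤ M then V t ω else 0) ∂P := by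
  classical
  set g : Fin n → Ω → ℝ := fun t ω => if M < V t ω then V t ω else 0 with hg
  set A : Fin n → Set Ω := fun t => {ω | ∀ s, s < t → V s ω ≤ M} with hA
  set χ : Fin n → Ω → ℝ := fun t => (A t).indicator 1 with hχ
  have hgmeas : ∀ t, Measurable (g t) := fun t =>
    Measurable.ite (measurableSet_lt measurable_const (hmeas t)) (hmeas t) measurable_const
  have hgnonneg : ∀ t ω, 0 ≤ g t ω := by
    intro t ω
    simp only [hg]
    split
    · exact le_of_lt (lt_of_le_of_lt hM ‹_›)
    · exact le_refl 0
  have hgbound : ∀ t ω, ‖g t ω‖ ≤ ‖V t ω‖ := by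
    intro t ω
    simp only [hg]
    split
    · exact le_refl _
    · simp [abs_nonneg]
  have hgint : ∀ t, Integrable (g t) P := fun t =>
    (hint t).mono (hgmeas t).aestronglyMeasurable (ae_of_all _ (hgbound t))
  have hAmeas : ∀ t, MeasurableSet (A t) := by
    intro t
    have : A t = ⋂ s : Fin n, ⋂ _ : s < t, {ω | V s ω ≤ M} := by
      ext ω; simp [hA, Set.mem_iInter]
    rw [this]
    exact MeasurableSet.iInter fun s => MeasurableSet.iInter fun _ =>
      measurableSet_le (hmeas s) measurable_const
  have hχmeas : ∀ t, Measurable (χ t) := fun t =>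
    (measurable_const.indicator (hAmeas t))
  have hχint : ∀ t, Integrable (χ t) P := by
    intro t
    refine Integrable.mono (integrable_const (1:ℝ)) (hχmeas t).aestronglyMeasurable
      (ae_of_all _ fun ω => ?_)
    simp only [hχ, Set.indicator]
    split <;> simp
  -- independence of g t and χ t
  have hindepgt : ∀ t, IndepFun (g t) (χ t) P := by
    intro t
    set S : Finset (Fin n) := {t} with hS
    set T : Finset (Fin n) := Finset.univ.filter (· < t) with hT
    have hST : Disjoint S T := by
      simp only [hS, hT, Finset.disjoint_left, Finset.mem_singleton, Finset.mem_filter]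
      rintro a rfl ⟨_, h⟩
      exact absurd h (lt_irrefl _)
    have hbase := hindep.indepFun_finset S T hST hmeas
    have htS : t ∈ S := Finset.mem_singleton_self t
    set φ : (S → ℝ) → ℝ := fun x => if M < x ⟨t, htS⟩ then x ⟨t, htS⟩ else 0 with hφ
    set ψ : (T → ℝ) → ℝ := fun x => if ∀ i : T, x i ≤ M then 1 else 0 with hψ
    have hφm : Measurable φ := by
      apply Measurable.ite _ (measurable_pi_apply _) measurable_const
      exact measurableSet_lt measurable_const (measurable_pi_apply _)
    have hψm : Measurable ψ := by
      apply Measurable.ite _ measurable_const measurable_const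
      have : {x : (T → ℝ) | ∀ i : T, x i ≤ M} = ⋂ i : T, {x | x i ≤ M} := by
        ext x; simp [Set.mem_iInter]
      rw [this]
      exact MeasurableSet.iInter fun i => measurableSet_le (measurable_pi_apply _) measurable_const
    have := hbase.comp hφm hψm
    have h1 : (φ ∘ fun a (i : S) => V i a) = g t := by
      funext ω; simp [hφ, hg]
    have h2 : (ψ ∘ fun a (i : T) => V i a) = χ t := by
      funext ω
      simp only [Function.comp, hψ, hχ, Set.indicator, hA, Set.mem_setOf_eq]
      by_cases h : ∀ s, s < t → V s ω ≤ M
      · rw [if_pos h, if_pos (fun i : T => h i (Finset.mem_filter.mp i.2).2), Pi.one_apply]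
      · rw [if_neg h, if_neg]
        intro hc
        exact h fun s hs => hc ⟨s, Finset.mem_filter.mpr ⟨Finset.mem_univ s, hs⟩⟩
    rwa [h1, h2] at this
  -- product integral factors
  have hprod : ∀ t, ∫ ω, g t ω * χ t ω ∂P = (∫ ω, g t ω ∂P) * (P (A t)).toReal := by
    intro t
    have := (hindepgt t).integral_mul_eq_mul_integral (hgint t).aestronglyMeasurable (hχint t).aestronglyMeasurable
    have hχval : ∫ ω, χ t ω ∂P = (P (A t)).toReal := integral_indicator_one (hAmeas t)
    calc ∫ ω, g t ω * χ t ω ∂P = ∫ ω, (g t * χ t) ω ∂P := rfl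
      _ = (∫ ω, g t ω ∂P) * ∫ ω, χ t ω ∂P := this
      _ = (∫ ω, g t ω ∂P) * (P (A t)).toReal := by rw [hχval]
  -- lower bound on P (A t)
  have hEmeas : MeasurableSet {ω | ∃ t, M < V t ω} := by
    have : {ω | ∃ t, M < V t ω} = ⋃ t, {ω | M < V t ω} := by ext ω; simp
    rw [this]
    exact MeasurableSet.iUnion fun t => measurableSet_lt measurable_const (hmeas t)
  have hPA : ∀ t, 1 - (P {ω | ∃ t, M < V t ω}).toReal ≤ (P (A t)).toReal := by
    intro t
    have hsub : {ω | ∃ t, M < V t ω}ᶜ ⊆ A t := by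
      intro ω hω s _
      simp only [Set.mem_compl_iff, Set.mem_setOf_eq, not_exists, not_lt] at hω
      exact hω s
    have hc : P {ω | ∃ t, M < V t ω}ᶜ = 1 - P {ω | ∃ t, M < V t ω} :=
      prob_compl_eq_one_sub hEmeas
    have h1 : (P {ω | ∃ t, M < V t ω}ᶜ).toReal = 1 - (P {ω | ∃ t, M < V t ω}).toReal := by
      rw [hc, ENNReal.toReal_sub_of_le prob_le_one (by simp)]
      simp
    rw [← h1]
    exact ENNReal.toReal_mono (measure_ne_top P _) (measure_mono hsub)
  -- rewrite RHS
  have hintegrand : ∀ ω t, (if M < V t ω ∧ ∀ s, s < t → V s ω ≤ M then V t ω else 0)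
      = g t ω * χ t ω := by
    intro ω t
    simp only [hg, hχ, hA, Set.indicator]
    by_cases h1 : M < V t ω <;> by_cases h2 : ∀ s, s < t → V s ω ≤ M <;>
      simp [h1, h2]
  have hRHS : ∫ ω, ∑ t, (if M < V t ω ∧ ∀ s, s < t → V s ω ≤ M then V t ω else 0) ∂P
      = ∑ t, (∫ ω, g t ω ∂P) * (P (A t)).toReal := by
    have : ∀ ω, (∑ t, (if M < V t ω ∧ ∀ s, s < t → V s ω ≤ M then V t ω else 0))
        = ∑ t, g t ω * χ t ω := by
      intro ω; exact Finset.sum_congr rfl fun t _ => hintegrand ω t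
    simp_rw [this]
    rw [integral_finset_sum]
    · exact Finset.sum_congr rfl fun t _ => hprod t
    · intro t _
      have hb : Integrable (fun ω => χ t ω * g t ω) P :=
        (hgint t).bdd_mul (hχmeas t).aestronglyMeasurable
          (c := 1) (ae_of_all _ fun ω => by simp only [hχ, Set.indicator]; split <;> simp)
      exact hb.congr (Filter.Eventually.of_forall fun ω => mul_comm _ _)
  rw [hRHS, Finset.mul_sum]
  apply Finset.sum_le_sum
  intro t _
  have hg0 : 0 ≤ ∫ ω, g t ω ∂P := integral_nonneg (hgnonneg t)
  calc (1 - (P {ω | ∃ t, M < V t ω}).toReal) * ∫ ω, (if M < V t ω then V t ω else 0) ∂P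
      = (∫ ω, g t ω ∂P) * (1 - (P {ω | ∃ t, M < V t ω}).toReal) := by rw [mul_comm]
    _ ≤ (∫ ω, g t ω ∂P) * (P (A t)).toReal := by
        exact mul_le_mul_of_nonneg_left (hPA t) hg0
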